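/- Under the instrumental-variable moment condition, E[(Y − q0(X) − θ0(X)·(T − p0(X)))·(Z − r0(X)) | X] = 0 almost surely; equivalently, E[(Y − q0(X))·(Z − r0(X)) | X] = θ0(X)·β0(X) almost surely. -/

import Mathlib

open MeasureTheory

private lemma hb_mul {a b C D : ℝ} (ha : |a| ≤ C) (hb : |b| ≤ D) : |a * b| ≤ C * D := by
  calc |a * b| = |a| * |b| := abs_mul a b
    _ ≤ C * D := mul_le_mul ha hb (abs_nonneg _) ((abs_nonneg a).trans ha)

private lemma hb_sub {a b C D : ℝ} (ha : |a| ≤ C) (hb : |b| ≤ D) : |a - b| ≤ C + D :=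
  (abs_sub a b).trans (add_le_add ha hb)

private lemma hb_add {a b C D : ℝ} (ha : |a| ≤ C) (hb : |b| ≤ D) : |a + b| ≤ C + D :=
  (abs_add_le a b).trans (add_le_add ha hb)

theorem stmt_8
    {Ω 𝓧 : Type*} [MeasurableSpace Ω] [MeasurableSpace 𝓧] [StandardBorelSpace 𝓧]
    (μ : Measure Ω) [IsProbabilityMeasure μ]
    (Y T Z : Ω → ℝ) (X : Ω → 𝓧)
    (hY : Measurable Y) (hT : Measurable T) (hZ : Measurable Z) (hX : Measurable X)
    (hYbdd : ∃ C, ∀ ω, |Y ω| ≤ C) (hTbdd : ∃ C, ∀ ω, |T ω| ≤ C)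
    (hZbdd : ∃ C, ∀ ω, |Z ω| ≤ C)
    (θ0 f0 : 𝓧 → ℝ) (hθ0m : Measurable θ0) (hf0m : Measurable f0)
    (hθ0bdd : ∃ C, ∀ x, |θ0 x| ≤ C) (hf0bdd : ∃ C, ∀ x, |f0 x| ≤ C)
    (hIV : μ[fun ω => Y ω - θ0 (X ω) * T ω - f0 (X ω) |
        MeasurableSpace.comap (fun ω => (Z ω, X ω)) inferInstance] =ᵐ[μ] 0)
    (q0 p0 r0 : 𝓧 → ℝ) (hq0m : Measurable q0) (hp0m : Measurable p0) (hr0m : Measurable r0)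
    (hq0bdd : ∃ C, ∀ x, |q0 x| ≤ C) (hp0bdd : ∃ C, ∀ x, |p0 x| ≤ C)
    (hr0bdd : ∃ C, ∀ x, |r0 x| ≤ C)
    (hq0 : (fun ω => q0 (X ω)) =ᵐ[μ] μ[Y | MeasurableSpace.comap X inferInstance])
    (hp0 : (fun ω => p0 (X ω)) =ᵐ[μ] μ[T | MeasurableSpace.comap X inferInstance])
    (hr0 : (fun ω => r0 (X ω)) =ᵐ[μ] μ[Z | MeasurableSpace.comap X inferInstance])
    (h0 : ℝ × 𝓧 → ℝ) (hh0m : Measurable h0) (hh0bdd : ∃ C, ∀ zx, |h0 zx| ≤ C)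
    (hh0 : (fun ω => h0 (Z ω, X ω)) =ᵐ[μ]
        μ[T | MeasurableSpace.comap (fun ω => (Z ω, X ω)) inferInstance])
    (β0 : 𝓧 → ℝ) (hβ0m : Measurable β0) (hβ0bdd : ∃ C, ∀ x, |β0 x| ≤ C)
    (hβ0 : (fun ω => β0 (X ω)) =ᵐ[μ]
        μ[fun ω => (T ω - p0 (X ω)) * (Z ω - r0 (X ω)) | MeasurableSpace.comap X inferInstance])
    (V0 : 𝓧 → ℝ) (hV0m : Measurable V0) (hV0bdd : ∃ C, ∀ x, |V0 x| ≤ C)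
    (hV0 : (fun ω => V0 (X ω)) =ᵐ[μ]
        μ[fun ω => (h0 (Z ω, X ω) - p0 (X ω)) ^ 2 | MeasurableSpace.comap X inferInstance]) :
    (μ[fun ω => (Y ω - q0 (X ω) - θ0 (X ω) * (T ω - p0 (X ω))) * (Z ω - r0 (X ω)) |
        MeasurableSpace.comap X inferInstance] =ᵐ[μ] 0)
    ∧ μ[fun ω => (Y ω - q0 (X ω)) * (Z ω - r0 (X ω)) | MeasurableSpace.comap X inferInstance]
        =ᵐ[μ] (fun ω => θ0 (X ω) * β0 (X ω)) := by
  obtain ⟨CY, hCY⟩ := hYbdd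
  obtain ⟨CT, hCT⟩ := hTbdd
  obtain ⟨CZ, hCZ⟩ := hZbdd
  obtain ⟨Cθ, hCθ⟩ := hθ0bdd
  obtain ⟨Cf, hCf⟩ := hf0bdd
  obtain ⟨Cq, hCq⟩ := hq0bdd
  obtain ⟨Cp, hCp⟩ := hp0bdd
  obtain ⟨Cr, hCr⟩ := hr0bdd
  have hm₁ : MeasurableSpace.comap X inferInstance ≤ ‹MeasurableSpace Ω› := hX.comap_le
  have hm₂ : MeasurableSpace.comap (fun ω => (Z ω, X ω)) inferInstance ≤ ‹MeasurableSpace Ω› :=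
    (hZ.prodMk hX).comap_le
  have h12 : MeasurableSpace.comap X inferInstance
      ≤ MeasurableSpace.comap (fun ω => (Z ω, X ω)) inferInstance := by
    have hXeq : X = Prod.snd ∘ (fun ω => (Z ω, X ω)) := rfl
    rw [hXeq, ← MeasurableSpace.comap_comp]
    exact MeasurableSpace.comap_mono measurable_snd.comap_le
  have hXm₁ : Measurable[(MeasurableSpace.comap X inferInstance)] X := measurable_iff_comap_le.mpr le_rfl
  have hpairm₂ : Measurable[(MeasurableSpace.comap (fun ω => (Z ω, X ω)) inferInstance)] (fun ω => (Z ω, X ω)) := measurable_iff_comap_le.mpr le_rfl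
  -- integrability helper
  have intb : ∀ {f : Ω → ℝ}, Measurable f → ∀ C : ℝ, (∀ ω, |f ω| ≤ C) → Integrable f μ := by
    intro f hf C hC
    exact (memLp_top_of_bound hf.aestronglyMeasurable C
      (Filter.Eventually.of_forall fun ω => by simpa using hC ω)).integrable le_top
  -- measurable pieces
  have measW : Measurable fun ω => Y ω - θ0 (X ω) * T ω - f0 (X ω) :=
    (hY.sub ((hθ0m.comp hX).mul hT)).sub (hf0m.comp hX)
  have measR : Measurable fun ω => Z ω - r0 (X ω) := hZ.sub (hr0m.comp hX)
  have measg : Measurable fun ω => f0 (X ω) + θ0 (X ω) * p0 (X ω) - q0 (X ω) :=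
    ((hf0m.comp hX).add ((hθ0m.comp hX).mul (hp0m.comp hX))).sub (hq0m.comp hX)
  have measTp : Measurable fun ω => T ω - p0 (X ω) := hT.sub (hp0m.comp hX)
  -- bounds
  have bW : ∀ ω, |Y ω - θ0 (X ω) * T ω - f0 (X ω)| ≤ CY + Cθ * CT + Cf :=
    fun ω => hb_sub (hb_sub (hCY ω) (hb_mul (hCθ (X ω)) (hCT ω))) (hCf (X ω))
  have bR : ∀ ω, |Z ω - r0 (X ω)| ≤ CZ + Cr := fun ω => hb_sub (hCZ ω) (hCr (X ω))
  have bg : ∀ ω, |f0 (X ω) + θ0 (X ω) * p0 (X ω) - q0 (X ω)| ≤ Cf + Cθ * Cp + Cq :=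
    fun ω => hb_sub (hb_add (hCf (X ω)) (hb_mul (hCθ (X ω)) (hCp (X ω)))) (hCq (X ω))
  have bTp : ∀ ω, |T ω - p0 (X ω)| ≤ CT + Cp := fun ω => hb_sub (hCT ω) (hCp (X ω))
  -- integrable facts
  have I_Z : Integrable Z μ := intb hZ CZ hCZ
  have I_r0X : Integrable (fun ω => r0 (X ω)) μ := intb (hr0m.comp hX) Cr fun ω => hCr (X ω)
  have I_R : Integrable (fun ω => Z ω - r0 (X ω)) μ := intb measR _ bR
  have I_W : Integrable (fun ω => Y ω - θ0 (X ω) * T ω - f0 (X ω)) μ := intb measW _ bW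
  have I_RW : Integrable ((fun ω => Z ω - r0 (X ω)) *
      (fun ω => Y ω - θ0 (X ω) * T ω - f0 (X ω))) μ :=
    intb (measR.mul measW) ((CZ + Cr) * (CY + Cθ * CT + Cf)) fun ω => hb_mul (bR ω) (bW ω)
  have I_WR : Integrable (fun ω => (Y ω - θ0 (X ω) * T ω - f0 (X ω)) * (Z ω - r0 (X ω))) μ :=
    intb (measW.mul measR) ((CY + Cθ * CT + Cf) * (CZ + Cr)) fun ω => hb_mul (bW ω) (bR ω)
  have I_gR : Integrable ((fun ω => f0 (X ω) + θ0 (X ω) * p0 (X ω) - q0 (X ω)) *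
      (fun ω => Z ω - r0 (X ω))) μ :=
    intb (measg.mul measR) ((Cf + Cθ * Cp + Cq) * (CZ + Cr)) fun ω => hb_mul (bg ω) (bR ω)
  have I_TpR : Integrable (fun ω => (T ω - p0 (X ω)) * (Z ω - r0 (X ω))) μ :=
    intb (measTp.mul measR) ((CT + Cp) * (CZ + Cr)) fun ω => hb_mul (bTp ω) (bR ω)
  have I_θTpR : Integrable ((fun ω => θ0 (X ω)) *
      (fun ω => (T ω - p0 (X ω)) * (Z ω - r0 (X ω)))) μ :=
    intb ((hθ0m.comp hX).mul (measTp.mul measR)) (Cθ * ((CT + Cp) * (CZ + Cr)))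
      fun ω => hb_mul (hCθ (X ω)) (hb_mul (bTp ω) (bR ω))
  have I_int1 : Integrable
      (fun ω => (Y ω - q0 (X ω) - θ0 (X ω) * (T ω - p0 (X ω))) * (Z ω - r0 (X ω))) μ :=
    intb (((hY.sub (hq0m.comp hX)).sub ((hθ0m.comp hX).mul measTp)).mul measR)
      ((CY + Cq + Cθ * (CT + Cp)) * (CZ + Cr))
      fun ω => hb_mul (hb_sub (hb_sub (hCY ω) (hCq (X ω)))
        (hb_mul (hCθ (X ω)) (bTp ω))) (bR ω)
  -- strongly measurable facts
  have hRsm : StronglyMeasurable[(MeasurableSpace.comap (fun ω => (Z ω, X ω)) inferInstance)] fun ω => Z ω - r0 (X ω) :=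
    ((measurable_fst.sub (hr0m.comp measurable_snd)).comp hpairm₂).stronglyMeasurable
  have hgsm : StronglyMeasurable[(MeasurableSpace.comap X inferInstance)] fun ω => f0 (X ω) + θ0 (X ω) * p0 (X ω) - q0 (X ω) :=
    (((hf0m.add (hθ0m.mul hp0m)).sub hq0m).comp hXm₁).stronglyMeasurable
  have hθsm : StronglyMeasurable[(MeasurableSpace.comap X inferInstance)] fun ω => θ0 (X ω) := (hθ0m.comp hXm₁).stronglyMeasurable
  -- E[R | (MeasurableSpace.comap X inferInstance)] = 0 a.e.
  have hr0cx : μ[(fun ω => r0 (X ω))|(MeasurableSpace.comap X inferInstance)] = fun ω => r0 (X ω) :=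
    condExp_of_stronglyMeasurable hm₁ ((hr0m.comp hXm₁).stronglyMeasurable) I_r0X
  have hRcond : μ[(fun ω => Z ω - r0 (X ω))|(MeasurableSpace.comap X inferInstance)] =ᵐ[μ] 0 := by
    have h1 : μ[(fun ω => Z ω - r0 (X ω))|(MeasurableSpace.comap X inferInstance)] =ᵐ[μ] μ[Z|(MeasurableSpace.comap X inferInstance)] - μ[(fun ω => r0 (X ω))|(MeasurableSpace.comap X inferInstance)] :=
      condExp_sub I_Z I_r0X _
    rw [hr0cx] at h1
    refine h1.trans ?_
    filter_upwards [hr0] with ω hω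
    simp [Pi.sub_apply, ← hω]
  -- E[R·W | (MeasurableSpace.comap (fun ω => (Z ω, X ω)) inferInstance)] = 0 a.e.
  have hWR2 : μ[(fun ω => Z ω - r0 (X ω)) *
      (fun ω => Y ω - θ0 (X ω) * T ω - f0 (X ω))|(MeasurableSpace.comap (fun ω => (Z ω, X ω)) inferInstance)] =ᵐ[μ] 0 := by
    refine (condExp_mul_of_stronglyMeasurable_left hRsm I_RW I_W).trans ?_
    filter_upwards [hIV] with ω hω
    simp [Pi.mul_apply, hω]
  -- E[W·R | (MeasurableSpace.comap X inferInstance)] = 0 a.e.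
  have hWR1 : μ[(fun ω => (Y ω - θ0 (X ω) * T ω - f0 (X ω)) * (Z ω - r0 (X ω)))|(MeasurableSpace.comap X inferInstance)]
      =ᵐ[μ] 0 := by
    have hcomm : (fun ω => (Y ω - θ0 (X ω) * T ω - f0 (X ω)) * (Z ω - r0 (X ω)))
        = (fun ω => Z ω - r0 (X ω)) * (fun ω => Y ω - θ0 (X ω) * T ω - f0 (X ω)) := by
      funext ω; simp [Pi.mul_apply, mul_comm]
    rw [hcomm]
    calc μ[(fun ω => Z ω - r0 (X ω)) * (fun ω => Y ω - θ0 (X ω) * T ω - f0 (X ω))|(MeasurableSpace.comap X inferInstance)]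
        =ᵐ[μ] μ[μ[(fun ω => Z ω - r0 (X ω)) *
          (fun ω => Y ω - θ0 (X ω) * T ω - f0 (X ω))|(MeasurableSpace.comap (fun ω => (Z ω, X ω)) inferInstance)]|(MeasurableSpace.comap X inferInstance)] :=
          (condExp_condExp_of_le h12 hm₂).symm
      _ =ᵐ[μ] μ[(0 : Ω → ℝ)|(MeasurableSpace.comap X inferInstance)] := condExp_congr_ae hWR2
      _ =ᵐ[μ] 0 := by rw [condExp_zero]
  -- E[g·R | (MeasurableSpace.comap X inferInstance)] = 0 a.e.
  have hgR : μ[(fun ω => f0 (X ω) + θ0 (X ω) * p0 (X ω) - q0 (X ω)) *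
      (fun ω => Z ω - r0 (X ω))|(MeasurableSpace.comap X inferInstance)] =ᵐ[μ] 0 := by
    refine (condExp_mul_of_stronglyMeasurable_left hgsm I_gR I_R).trans ?_
    filter_upwards [hRcond] with ω hω
    simp [Pi.mul_apply, hω]
  -- goal 1
  have goal1 : μ[(fun ω => (Y ω - q0 (X ω) - θ0 (X ω) * (T ω - p0 (X ω))) *
      (Z ω - r0 (X ω)))|(MeasurableSpace.comap X inferInstance)] =ᵐ[μ] 0 := by
    have heq : (fun ω => (Y ω - q0 (X ω) - θ0 (X ω) * (T ω - p0 (X ω))) * (Z ω - r0 (X ω)))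
        = (fun ω => (Y ω - θ0 (X ω) * T ω - f0 (X ω)) * (Z ω - r0 (X ω)))
          + (fun ω => f0 (X ω) + θ0 (X ω) * p0 (X ω) - q0 (X ω)) *
            (fun ω => Z ω - r0 (X ω)) := by
      funext ω; simp only [Pi.add_apply, Pi.mul_apply]; ring
    rw [heq]
    refine (condExp_add I_WR I_gR _).trans ?_
    filter_upwards [hWR1, hgR] with ω h1 h2
    simp [Pi.add_apply, h1, h2]
  refine ⟨goal1, ?_⟩
  -- goal 2
  have hpull2 : μ[(fun ω => θ0 (X ω)) *
      (fun ω => (T ω - p0 (X ω)) * (Z ω - r0 (X ω)))|(MeasurableSpace.comap X inferInstance)]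
      =ᵐ[μ] fun ω => θ0 (X ω) * β0 (X ω) := by
    refine (condExp_mul_of_stronglyMeasurable_left hθsm I_θTpR I_TpR).trans ?_
    filter_upwards [hβ0] with ω hω
    simp [Pi.mul_apply, ← hω]
  have heq2 : (fun ω => (Y ω - q0 (X ω)) * (Z ω - r0 (X ω)))
      = (fun ω => (Y ω - q0 (X ω) - θ0 (X ω) * (T ω - p0 (X ω))) * (Z ω - r0 (X ω)))
        + (fun ω => θ0 (X ω)) * (fun ω => (T ω - p0 (X ω)) * (Z ω - r0 (X ω))) := by
    funext ω; simp only [Pi.add_apply, Pi.mul_apply]; ring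
  rw [heq2]
  refine (condExp_add I_int1 I_θTpR _).trans ?_
  filter_upwards [goal1, hpull2] with ω h1 h2
  simp [Pi.add_apply, h1, h2]
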